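/- Let α ∈ (0,1], 0 < m₁ ≤ m₂, and M, K, K' ≥ 0. Then there exists a constant L, depending only on α, m₁, m₂, M, K, K', with the following property. For every differentiable ψ : ℝ² → ℝ with |ψ| ≤ M, |∇ψ| ≤ K, and ∇ψ Lipschitz with constant K', define a(ξ) := |ξ|^{−2} ψ(ξ/|ξ|) for ξ ≠ 0. Then for all v', v'' : [0,1] → ℝ² satisfying m₁ ≤ |v(x)| ≤ m₂ for all x and [v]_α ≤ m₂ (for v ∈ {v',v''}), one has ‖a∘v' − a∘v''‖∞ ≤ L ‖v' − v''‖∞ and [a∘v' − a∘v'']_α ≤ L (‖v' − v''‖∞ + [v' − v'']_α). -/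

import Mathlib

noncomputable section
open Set

abbrev E2 : Type := EuclideanSpace ℝ (Fin 2)

/-- The coefficient `a(ξ) = |ξ|⁻² ψ(ξ/|ξ|)` of the quasilinear parabolic system. -/
def coeffA (ψ : E2 → ℝ) (ξ : E2) : ℝ := (‖ξ‖ ^ 2)⁻¹ * ψ (‖ξ‖⁻¹ • ξ)

/-- The set of Hölder difference quotients of exponent `ρ` of a real-valued
function on `[0,1]`. -/
def hSet (ρ : ℝ) (f : ℝ → ℝ) : Set ℝ :=
  (fun p : ℝ × ℝ => |f p.1 - f p.2| / |p.1 - p.2| ^ ρ) ''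
    {p : ℝ × ℝ | p.1 ∈ Set.Icc (0:ℝ) 1 ∧ p.2 ∈ Set.Icc (0:ℝ) 1 ∧ p.1 ≠ p.2}

/-- The `ρ`-Hölder seminorm `[f]_ρ` of `f : [0,1] → ℝ`. -/
def hSemi (ρ : ℝ) (f : ℝ → ℝ) : ℝ := sSup (hSet ρ f)

/-- The sup norm `‖f‖_∞` of `f : [0,1] → ℝ`. -/
def supN (f : ℝ → ℝ) : ℝ := sSup ((fun x => |f x|) '' Set.Icc (0:ℝ) 1)

/-- The `ρ`-Hölder seminorm `[f]_ρ` of a vector-valued `f : [0,1] → ℝ²`. -/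
def hSemiE (ρ : ℝ) (f : ℝ → E2) : ℝ :=
  sSup ((fun p : ℝ × ℝ => ‖f p.1 - f p.2‖ / |p.1 - p.2| ^ ρ) ''
    {p : ℝ × ℝ | p.1 ∈ Set.Icc (0:ℝ) 1 ∧ p.2 ∈ Set.Icc (0:ℝ) 1 ∧ p.1 ≠ p.2})

/-- The sup norm `‖f‖_∞` of `f : [0,1] → ℝ²`. -/
def supNE (f : ℝ → E2) : ℝ := sSup ((fun x => ‖f x‖) '' Set.Icc (0:ℝ) 1)

namespace CoeffAux

/-- global Lipschitz bound for ψ -/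
lemma psi_lip {K : ℝ} (ψ : E2 → ℝ) (hd : Differentiable ℝ ψ)
    (hK : ∀ u : E2, ‖fderiv ℝ ψ u‖ ≤ K) (a b : E2) : |ψ a - ψ b| ≤ K * ‖a - b‖ := by
  have := Convex.norm_image_sub_le_of_norm_fderiv_le (f := ψ)
    (fun x _ => (hd x)) (fun x _ => hK x) convex_univ (mem_univ b) (mem_univ a)
  simpa [Real.norm_eq_abs] using this

/-- shifted second difference for ψ -/
lemma psi_shift {K' : ℝ} (ψ : E2 → ℝ) (hd : Differentiable ℝ ψ)
    (hK' : ∀ u v : E2, ‖fderiv ℝ ψ u - fderiv ℝ ψ v‖ ≤ K' * ‖u - v‖)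
    (h b d : E2) : |ψ (b + h) - ψ b - (ψ (d + h) - ψ d)| ≤ (K' * ‖h‖) * ‖b - d‖ := by
  have hdphi : ∀ z : E2, HasFDerivAt (fun z : E2 => ψ (z + h) - ψ z)
      (fderiv ℝ ψ (z + h) - fderiv ℝ ψ z) z := by
    intro z
    have h1 : HasFDerivAt (fun z : E2 => ψ (z + h)) (fderiv ℝ ψ (z + h)) z := by
      exact ((hd (z + h)).hasFDerivAt.comp z ((hasFDerivAt_id z).add_const h)).congr_fderiv (by simp)
    exact h1.sub (hd z).hasFDerivAt
  have := Convex.norm_image_sub_le_of_norm_hasFDerivWithin_le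
    (f := fun z : E2 => ψ (z + h) - ψ z)
    (fun z _ => (hdphi z).hasFDerivWithinAt)
    (fun z _ => by simpa [add_sub_cancel_left] using hK' (z + h) z)
    convex_univ (mem_univ d) (mem_univ b)
  simpa [Real.norm_eq_abs] using this

/-- key inner-product identity -/
lemma norm_sub_eq_inner (p q : E2) (hp : 0 < ‖p‖) (hq : 0 < ‖q‖) :
    ‖p‖ - ‖q‖ = (inner ℝ ((‖p‖ + ‖q‖)⁻¹ • (p + q)) (p - q) : ℝ) := by
  have hS : ‖p‖ + ‖q‖ ≠ 0 := by positivity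
  rw [real_inner_smul_left]
  have h1 : (inner ℝ (p + q) (p - q) : ℝ) = ‖p‖ ^ 2 - ‖q‖ ^ 2 := by
    rw [inner_sub_right, inner_add_left, inner_add_left, real_inner_self_eq_norm_sq,
      real_inner_self_eq_norm_sq, real_inner_comm q p]
    ring
  rw [h1]
  field_simp
  ring

end CoeffAux

namespace Geo

/-- scalar inverse difference -/
lemma inv_diff {c a b : ℝ} (hc : 0 < c) (ha : c ≤ a) (hb : c ≤ b) :
    |a⁻¹ - b⁻¹| ≤ c⁻¹ * c⁻¹ * |a - b| := by
  have ha0 : 0 < a := hc.trans_le ha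
  have hb0 : 0 < b := hc.trans_le hb
  rw [inv_sub_inv ha0.ne' hb0.ne', abs_div, abs_of_pos (mul_pos ha0 hb0), abs_sub_comm]
  have hcc : c⁻¹ * c⁻¹ * |a - b| = |a - b| / (c * c) := by
    field_simp
  rw [hcc]
  exact div_le_div_of_nonneg_left (abs_nonneg _) (by positivity)
    (mul_le_mul ha hb hc.le ha0.le)

def uvec (ξ : E2) : E2 := ‖ξ‖⁻¹ • ξ
def gvec (p q : E2) : E2 := (‖p‖ + ‖q‖)⁻¹ • (p + q)
def fA (ξ : E2) : ℝ := (‖ξ‖ ^ 2)⁻¹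

variable {r R : ℝ} {p q p' q' : E2}

lemma gvec_norm_le (hr : 0 < r) (hp : r ≤ ‖p‖) (hq : r ≤ ‖q‖) : ‖gvec p q‖ ≤ 1 := by
  have hS : 0 < ‖p‖ + ‖q‖ := by linarith [hr.trans_le hp, hr.trans_le hq]
  rw [gvec, norm_smul, Real.norm_eq_abs, abs_of_pos (inv_pos.2 hS)]
  rw [inv_mul_le_iff₀ hS, mul_one]
  exact norm_add_le p q

lemma gvec_lip (hr : 0 < r) (hp : r ≤ ‖p‖) (hq : r ≤ ‖q‖) (hp' : r ≤ ‖p'‖) (hq' : r ≤ ‖q'‖)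
    (hpR' : ‖p'‖ ≤ R) (hqR' : ‖q'‖ ≤ R) :
    ‖gvec p q - gvec p' q'‖ ≤
      ((2*r)⁻¹ * (2*r)⁻¹ * (2*R) + (2*r)⁻¹) * (‖p - p'‖ + ‖q - q'‖) := by
  set S := ‖p‖ + ‖q‖ with hSdef
  set S' := ‖p'‖ + ‖q'‖ with hS'def
  have h2r : (0:ℝ) < 2*r := by linarith
  have hS2 : 2*r ≤ S := by rw [hSdef]; linarith
  have hS2' : 2*r ≤ S' := by rw [hS'def]; linarith
  have hid : gvec p q - gvec p' q' =
      S⁻¹ • ((p + q) - (p' + q')) + (S⁻¹ - S'⁻¹) • (p' + q') := by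
    rw [gvec, gvec, smul_sub, sub_smul]; abel
  rw [hid]
  have h1 : ‖S⁻¹ • ((p + q) - (p' + q'))‖ ≤ (2*r)⁻¹ * (‖p - p'‖ + ‖q - q'‖) := by
    rw [norm_smul, Real.norm_eq_abs, abs_of_pos (inv_pos.2 (h2r.trans_le hS2))]
    have hre : p + q - (p' + q') = (p - p') + (q - q') := by abel
    have hnn : ‖(p + q) - (p' + q')‖ ≤ ‖p - p'‖ + ‖q - q'‖ := by
      rw [hre]; exact norm_add_le _ _
    have hSinv : S⁻¹ ≤ (2*r)⁻¹ := by
      apply inv_anti₀ h2r hS2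
    have h0 : (0:ℝ) ≤ ‖(p + q) - (p' + q')‖ := norm_nonneg _
    nlinarith [norm_nonneg (p + q - (p' + q')), inv_pos.2 (h2r.trans_le hS2),
      inv_pos.2 h2r]
  have h2 : ‖(S⁻¹ - S'⁻¹) • (p' + q')‖ ≤
      (2*r)⁻¹ * (2*r)⁻¹ * (‖p - p'‖ + ‖q - q'‖) * (2*R) := by
    rw [norm_smul, Real.norm_eq_abs]
    have hSS : |S⁻¹ - S'⁻¹| ≤ (2*r)⁻¹ * (2*r)⁻¹ * |S - S'| := inv_diff h2r hS2 hS2'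
    have hSdiff : |S - S'| ≤ ‖p - p'‖ + ‖q - q'‖ := by
      have e1 := abs_norm_sub_norm_le p p'
      have e2 := abs_norm_sub_norm_le q q'
      rw [hSdef, hS'def]
      calc |‖p‖ + ‖q‖ - (‖p'‖ + ‖q'‖)| = |(‖p‖ - ‖p'‖) + (‖q‖ - ‖q'‖)| := by ring_nf
        _ ≤ |‖p‖ - ‖p'‖| + |‖q‖ - ‖q'‖| := abs_add_le _ _
        _ ≤ ‖p - p'‖ + ‖q - q'‖ := by linarith
    have hPQ : ‖p' + q'‖ ≤ 2*R := by
      calc ‖p' + q'‖ ≤ ‖p'‖ + ‖q'‖ := norm_add_le _ _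
        _ ≤ 2*R := by linarith
    have h2ri : (0:ℝ) < (2*r)⁻¹ := inv_pos.2 h2r
    nlinarith [abs_nonneg (S⁻¹ - S'⁻¹), norm_nonneg (p' + q'), abs_nonneg (S - S'),
      mul_le_mul hSS hPQ (norm_nonneg _) (by positivity : (0:ℝ) ≤ (2*r)⁻¹ * (2*r)⁻¹ * |S - S'|),
      mul_le_mul hSdiff (le_refl (2*R)) (by linarith [hr.trans_le (hp'.trans hpR')] : (0:ℝ) ≤ 2*R) (by positivity)]
  calc ‖_ + _‖ ≤ _ := norm_add_le _ _
    _ ≤ (2*r)⁻¹ * (‖p - p'‖ + ‖q - q'‖) +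
        (2*r)⁻¹ * (2*r)⁻¹ * (‖p - p'‖ + ‖q - q'‖) * (2*R) := by linarith
    _ = ((2*r)⁻¹ * (2*r)⁻¹ * (2*R) + (2*r)⁻¹) * (‖p - p'‖ + ‖q - q'‖) := by ring

end Geo

namespace Geo

variable {r R : ℝ} {p q p' q' : E2}

/-- second difference of the norm -/
lemma norm_second (hr : 0 < r) (hp : r ≤ ‖p‖) (hq : r ≤ ‖q‖) (hp' : r ≤ ‖p'‖) (hq' : r ≤ ‖q'‖)
    (hpR' : ‖p'‖ ≤ R) (hqR' : ‖q'‖ ≤ R) :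
    |(‖p‖ - ‖q‖) - (‖p'‖ - ‖q'‖)| ≤
      ‖(p - q) - (p' - q')‖ +
      ((2*r)⁻¹ * (2*r)⁻¹ * (2*R) + (2*r)⁻¹) * (‖p - p'‖ + ‖q - q'‖) * ‖p' - q'‖ := by
  have hp0 : 0 < ‖p‖ := hr.trans_le hp
  have hq0 : 0 < ‖q‖ := hr.trans_le hq
  have hp0' : 0 < ‖p'‖ := hr.trans_le hp'
  have hq0' : 0 < ‖q'‖ := hr.trans_le hq'
  rw [CoeffAux.norm_sub_eq_inner p q hp0 hq0, CoeffAux.norm_sub_eq_inner p' q' hp0' hq0']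
  have hsplit : (inner ℝ (gvec p q) (p - q) : ℝ) - inner ℝ (gvec p' q') (p' - q') =
      (inner ℝ (gvec p q) ((p - q) - (p' - q')) : ℝ) +
      inner ℝ (gvec p q - gvec p' q') (p' - q') := by
    simp only [inner_sub_left, inner_sub_right]; ring
  show |(inner ℝ (gvec p q) (p - q) : ℝ) - inner ℝ (gvec p' q') (p' - q')| ≤ _
  rw [hsplit]
  have h1 : |(inner ℝ (gvec p q) ((p - q) - (p' - q')) : ℝ)| ≤ ‖(p - q) - (p' - q')‖ := by
    calc |(inner ℝ (gvec p q) ((p - q) - (p' - q')) : ℝ)|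
        ≤ ‖gvec p q‖ * ‖(p - q) - (p' - q')‖ := abs_real_inner_le_norm _ _
      _ ≤ 1 * ‖(p - q) - (p' - q')‖ := by
          gcongr; exact gvec_norm_le hr hp hq
      _ = ‖(p - q) - (p' - q')‖ := one_mul _
  have h2 : |(inner ℝ (gvec p q - gvec p' q') (p' - q') : ℝ)| ≤
      ((2*r)⁻¹ * (2*r)⁻¹ * (2*R) + (2*r)⁻¹) * (‖p - p'‖ + ‖q - q'‖) * ‖p' - q'‖ := by
    calc |(inner ℝ (gvec p q - gvec p' q') (p' - q') : ℝ)|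
        ≤ ‖gvec p q - gvec p' q'‖ * ‖p' - q'‖ := abs_real_inner_le_norm _ _
      _ ≤ (((2*r)⁻¹ * (2*r)⁻¹ * (2*R) + (2*r)⁻¹) * (‖p - p'‖ + ‖q - q'‖)) * ‖p' - q'‖ := by
          gcongr
          exact gvec_lip hr hp hq hp' hq' hpR' hqR'
      _ = _ := by ring
  exact (abs_add_le _ _).trans (by linarith)

/-- Lipschitz bound for the unit vector map -/
lemma uvec_lip (hr : 0 < r) (hp : r ≤ ‖p‖) (hq : r ≤ ‖q‖) (hqR : ‖q‖ ≤ R) :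
    ‖uvec p - uvec q‖ ≤ (r⁻¹ + r⁻¹ * r⁻¹ * R) * ‖p - q‖ := by
  have hp0 : 0 < ‖p‖ := hr.trans_le hp
  have hq0 : 0 < ‖q‖ := hr.trans_le hq
  have hid : uvec p - uvec q = ‖p‖⁻¹ • (p - q) + (‖p‖⁻¹ - ‖q‖⁻¹) • q := by
    rw [uvec, uvec, smul_sub, sub_smul]; abel
  rw [hid]
  have h1 : ‖(‖p‖⁻¹ : ℝ) • (p - q)‖ ≤ r⁻¹ * ‖p - q‖ := by
    rw [norm_smul, Real.norm_eq_abs, abs_of_pos (inv_pos.2 hp0)]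
    exact mul_le_mul_of_nonneg_right (inv_anti₀ hr hp) (norm_nonneg _)
  have h2 : ‖(‖p‖⁻¹ - ‖q‖⁻¹) • q‖ ≤ r⁻¹ * r⁻¹ * R * ‖p - q‖ := by
    rw [norm_smul, Real.norm_eq_abs]
    have hinv : |‖p‖⁻¹ - ‖q‖⁻¹| ≤ r⁻¹ * r⁻¹ * |‖p‖ - ‖q‖| := inv_diff hr hp hq
    have hnn : |‖p‖ - ‖q‖| ≤ ‖p - q‖ := abs_norm_sub_norm_le p q
    have hri : (0:ℝ) < r⁻¹ := inv_pos.2 hr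
    nlinarith [abs_nonneg (‖p‖⁻¹ - ‖q‖⁻¹), norm_nonneg q, abs_nonneg (‖p‖ - ‖q‖),
      mul_le_mul hinv hqR (norm_nonneg q) (by positivity : (0:ℝ) ≤ r⁻¹ * r⁻¹ * |‖p‖ - ‖q‖|),
      mul_le_mul hnn (le_refl R) (hr.le.trans (hq.trans hqR)) (by positivity)]
  calc ‖‖p‖⁻¹ • (p - q) + (‖p‖⁻¹ - ‖q‖⁻¹) • q‖
      ≤ ‖(‖p‖⁻¹ : ℝ) • (p - q)‖ + ‖(‖p‖⁻¹ - ‖q‖⁻¹) • q‖ := norm_add_le _ _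
    _ ≤ r⁻¹ * ‖p - q‖ + r⁻¹ * r⁻¹ * R * ‖p - q‖ := by linarith
    _ = (r⁻¹ + r⁻¹ * r⁻¹ * R) * ‖p - q‖ := by ring

end Geo

namespace Geo

variable {r R : ℝ} {p q p' q' : E2}

set_option maxRecDepth 8000 in
set_option maxHeartbeats 1000000 in
/-- second difference of the unit vector map -/
lemma uvec_second (hr : 0 < r) (hp : r ≤ ‖p‖) (hq : r ≤ ‖q‖) (hp' : r ≤ ‖p'‖) (hq' : r ≤ ‖q'‖)
    (hpR : ‖p‖ ≤ R) (hqR : ‖q‖ ≤ R) (hpR' : ‖p'‖ ≤ R) (hqR' : ‖q'‖ ≤ R) :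
    ‖(uvec p - uvec q) - (uvec p' - uvec q')‖ ≤
      (2*r⁻¹) * ‖(p - q) - (p' - q')‖ +
      (2*(r⁻¹*r⁻¹) + ((2*r)⁻¹ * (2*r)⁻¹ * (2*R) + (2*r)⁻¹)*r⁻¹ + R*R*(r⁻¹*r⁻¹*r⁻¹*r⁻¹))
        * ((‖p - p'‖ + ‖q - q'‖) * ‖p' - q'‖) := by
  have hp0 : 0 < ‖p‖ := hr.trans_le hp
  have hq0 : 0 < ‖q‖ := hr.trans_le hq
  have hp0' : 0 < ‖p'‖ := hr.trans_le hp'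
  have hq0' : 0 < ‖q'‖ := hr.trans_le hq'
  have hR0 : (0:ℝ) < R := hp0.trans_le hpR
  have hri : (0:ℝ) < r⁻¹ := inv_pos.2 hr
  set D : E2 := (p - q) - (p' - q') with hD
  set Sm : ℝ := ‖p - p'‖ + ‖q - q'‖ with hSm
  have hSm0 : 0 ≤ Sm := by rw [hSm]; positivity
  set c₄ : ℝ := (2*r)⁻¹ * (2*r)⁻¹ * (2*R) + (2*r)⁻¹ with hc₄
  have hc₄0 : 0 ≤ c₄ := by rw [hc₄]; positivity
  set ν : ℝ := ‖q‖ - ‖p‖ with hν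
  set ν' : ℝ := ‖q'‖ - ‖p'‖ with hν'
  set V : E2 := (‖p‖ * ‖q‖)⁻¹ • q with hV
  set V' : E2 := (‖p'‖ * ‖q'‖)⁻¹ • q' with hV'
  have hdec : ∀ (a b : E2), 0 < ‖a‖ → 0 < ‖b‖ →
      uvec a - uvec b = ‖a‖⁻¹ • (a - b) + (‖b‖ - ‖a‖) • ((‖a‖ * ‖b‖)⁻¹ • b) := by
    intro a b ha hb
    have h1 : (‖a‖⁻¹ - ‖b‖⁻¹ : ℝ) = (‖b‖ - ‖a‖) * (‖a‖ * ‖b‖)⁻¹ := by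
      field_simp
    rw [uvec, uvec, smul_smul, ← h1, smul_sub, sub_smul]; abel
  have hid : (uvec p - uvec q) - (uvec p' - uvec q') =
      (‖p‖⁻¹ • D + (‖p‖⁻¹ - ‖p'‖⁻¹) • (p' - q')) + ((ν - ν') • V + ν' • (V - V')) := by
    rw [hdec p q hp0 hq0, hdec p' q' hp0' hq0', hD, hν, hν', hV, hV']
    simp only [smul_sub, sub_smul]
    abel
  rw [hid]
  have hT1 : ‖(‖p‖⁻¹ : ℝ) • D‖ ≤ r⁻¹ * ‖D‖ := by
    rw [norm_smul, Real.norm_eq_abs, abs_of_pos (inv_pos.2 hp0)]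
    exact mul_le_mul_of_nonneg_right (inv_anti₀ hr hp) (norm_nonneg _)
  have hT2 : ‖(‖p‖⁻¹ - ‖p'‖⁻¹ : ℝ) • (p' - q')‖ ≤ r⁻¹*r⁻¹ * (Sm * ‖p' - q'‖) := by
    rw [norm_smul, Real.norm_eq_abs]
    have hinv : |‖p‖⁻¹ - ‖p'‖⁻¹| ≤ r⁻¹ * r⁻¹ * |‖p‖ - ‖p'‖| := inv_diff hr hp hp'
    have hnn : |‖p‖ - ‖p'‖| ≤ Sm := by
      have := abs_norm_sub_norm_le p p'
      have := norm_nonneg (q - q')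
      rw [hSm]; linarith
    have step : |‖p‖⁻¹ - ‖p'‖⁻¹| ≤ r⁻¹ * r⁻¹ * Sm :=
      hinv.trans (mul_le_mul_of_nonneg_left hnn (by positivity))
    calc |‖p‖⁻¹ - ‖p'‖⁻¹| * ‖p' - q'‖ ≤ (r⁻¹ * r⁻¹ * Sm) * ‖p' - q'‖ :=
          mul_le_mul_of_nonneg_right step (norm_nonneg _)
      _ = r⁻¹*r⁻¹ * (Sm * ‖p' - q'‖) := by ring
  have hνV : ‖V‖ ≤ r⁻¹ := by
    rw [hV, norm_smul, Real.norm_eq_abs,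
      abs_of_pos (show (0:ℝ) < (‖p‖ * ‖q‖)⁻¹ by positivity)]
    rw [mul_inv, mul_assoc, inv_mul_cancel₀ hq0.ne', mul_one]
    exact inv_anti₀ hr hp
  have hT3 : ‖(ν - ν') • V‖ ≤ r⁻¹ * ‖D‖ + (c₄*r⁻¹) * (Sm * ‖p' - q'‖) := by
    rw [norm_smul, Real.norm_eq_abs]
    have hns := norm_second hr hp hq hp' hq' hpR' hqR'
    have hnn : |ν - ν'| ≤ ‖D‖ + c₄ * (Sm * ‖p' - q'‖) := by
      have e : ν - ν' = -((‖p‖ - ‖q‖) - (‖p'‖ - ‖q'‖)) := by rw [hν, hν']; ring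
      rw [e, abs_neg]
      calc |(‖p‖ - ‖q‖) - (‖p'‖ - ‖q'‖)| ≤ ‖D‖ + c₄ * Sm * ‖p' - q'‖ := hns
        _ = ‖D‖ + c₄ * (Sm * ‖p' - q'‖) := by ring
    calc |ν - ν'| * ‖V‖ ≤ (‖D‖ + c₄ * (Sm * ‖p' - q'‖)) * r⁻¹ :=
          mul_le_mul hnn hνV (norm_nonneg _) (by positivity)
      _ = r⁻¹ * ‖D‖ + (c₄*r⁻¹) * (Sm * ‖p' - q'‖) := by ring
  have hT4 : ‖ν' • (V - V')‖ ≤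
      (r⁻¹*r⁻¹ + R*R*(r⁻¹*r⁻¹*r⁻¹*r⁻¹)) * (Sm * ‖p' - q'‖) := by
    rw [norm_smul, Real.norm_eq_abs]
    have hν'b : |ν'| ≤ ‖p' - q'‖ := by
      rw [hν', abs_sub_comm]; exact abs_norm_sub_norm_le p' q'
    have hVV : ‖V - V'‖ ≤ (r⁻¹*r⁻¹ + R*R*(r⁻¹*r⁻¹*r⁻¹*r⁻¹)) * Sm := by
      have hidV : V - V' = (‖p‖ * ‖q‖)⁻¹ • (q - q') + ((‖p‖ * ‖q‖)⁻¹ - (‖p'‖ * ‖q'‖)⁻¹) • q' := by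
        rw [hV, hV', smul_sub, sub_smul]; abel
      rw [hidV]
      have hr2 : (0:ℝ) < r * r := by positivity
      have hab : r * r ≤ ‖p‖ * ‖q‖ := mul_le_mul hp hq hr.le hp0.le
      have hab' : r * r ≤ ‖p'‖ * ‖q'‖ := mul_le_mul hp' hq' hr.le hp0'.le
      have hA : ‖((‖p‖ * ‖q‖)⁻¹ : ℝ) • (q - q')‖ ≤ r⁻¹*r⁻¹ * ‖q - q'‖ := by
        rw [norm_smul, Real.norm_eq_abs, abs_of_pos (show (0:ℝ) < (‖p‖ * ‖q‖)⁻¹ by positivity)]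
        have h1 : (‖p‖ * ‖q‖)⁻¹ ≤ (r*r)⁻¹ := inv_anti₀ hr2 hab
        rw [← mul_inv]
        exact mul_le_mul_of_nonneg_right h1 (norm_nonneg _)
      have hB : ‖(((‖p‖ * ‖q‖)⁻¹ - (‖p'‖ * ‖q'‖)⁻¹ : ℝ)) • q'‖ ≤
          R*R*(r⁻¹*r⁻¹*r⁻¹*r⁻¹) * Sm := by
        rw [norm_smul, Real.norm_eq_abs]
        have hinv : |(‖p‖ * ‖q‖)⁻¹ - (‖p'‖ * ‖q'‖)⁻¹| ≤
            (r*r)⁻¹ * (r*r)⁻¹ * |‖p‖ * ‖q‖ - ‖p'‖ * ‖q'‖| := inv_diff hr2 hab hab'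
        have hprod : |‖p‖ * ‖q‖ - ‖p'‖ * ‖q'‖| ≤ R * Sm := by
          have e1 : ‖p‖ * ‖q‖ - ‖p'‖ * ‖q'‖ = (‖p‖ - ‖p'‖) * ‖q‖ + ‖p'‖ * (‖q‖ - ‖q'‖) := by ring
          rw [e1]
          have e2 : |‖p‖ - ‖p'‖| ≤ ‖p - p'‖ := abs_norm_sub_norm_le p p'
          have e3 : |‖q‖ - ‖q'‖| ≤ ‖q - q'‖ := abs_norm_sub_norm_le q q'
          calc |(‖p‖ - ‖p'‖) * ‖q‖ + ‖p'‖ * (‖q‖ - ‖q'‖)|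
              ≤ |(‖p‖ - ‖p'‖) * ‖q‖| + |‖p'‖ * (‖q‖ - ‖q'‖)| := abs_add_le _ _
            _ = |‖p‖ - ‖p'‖| * ‖q‖ + ‖p'‖ * |‖q‖ - ‖q'‖| := by
                rw [abs_mul, abs_mul, abs_of_nonneg (norm_nonneg q), abs_of_nonneg (norm_nonneg p')]
            _ ≤ ‖p - p'‖ * R + R * ‖q - q'‖ := by
                have := abs_nonneg (‖p‖ - ‖p'‖)
                have := abs_nonneg (‖q‖ - ‖q'‖)
                nlinarith [norm_nonneg (p - p'), norm_nonneg (q - q')]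
            _ = R * Sm := by rw [hSm]; ring
        have step : |(‖p‖ * ‖q‖)⁻¹ - (‖p'‖ * ‖q'‖)⁻¹| ≤ (r*r)⁻¹ * (r*r)⁻¹ * (R * Sm) :=
          hinv.trans (mul_le_mul_of_nonneg_left hprod (by positivity))
        calc |(‖p‖ * ‖q‖)⁻¹ - (‖p'‖ * ‖q'‖)⁻¹| * ‖q'‖
            ≤ ((r*r)⁻¹ * (r*r)⁻¹ * (R * Sm)) * R :=
              mul_le_mul step hqR' (norm_nonneg _) (by positivity)
          _ = R*R*(r⁻¹*r⁻¹*r⁻¹*r⁻¹) * Sm := by rw [mul_inv]; ring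
      calc ‖((‖p‖ * ‖q‖)⁻¹ : ℝ) • (q - q') + ((‖p‖ * ‖q‖)⁻¹ - (‖p'‖ * ‖q'‖)⁻¹ : ℝ) • q'‖
          ≤ ‖((‖p‖ * ‖q‖)⁻¹ : ℝ) • (q - q')‖ +
            ‖(((‖p‖ * ‖q‖)⁻¹ - (‖p'‖ * ‖q'‖)⁻¹ : ℝ)) • q'‖ := norm_add_le _ _
        _ ≤ r⁻¹*r⁻¹ * ‖q - q'‖ + R*R*(r⁻¹*r⁻¹*r⁻¹*r⁻¹) * Sm := by linarith
        _ ≤ (r⁻¹*r⁻¹ + R*R*(r⁻¹*r⁻¹*r⁻¹*r⁻¹)) * Sm := by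
            have hq4 : ‖q - q'‖ ≤ Sm := by
              rw [hSm]; linarith [norm_nonneg (p - p')]
            nlinarith [mul_pos hri hri]
    calc |ν'| * ‖V - V'‖ ≤ ‖p' - q'‖ * ((r⁻¹*r⁻¹ + R*R*(r⁻¹*r⁻¹*r⁻¹*r⁻¹)) * Sm) :=
          mul_le_mul hν'b hVV (norm_nonneg _) (norm_nonneg _)
      _ = (r⁻¹*r⁻¹ + R*R*(r⁻¹*r⁻¹*r⁻¹*r⁻¹)) * (Sm * ‖p' - q'‖) := by ring
  calc ‖(‖p‖⁻¹ • D + (‖p‖⁻¹ - ‖p'‖⁻¹) • (p' - q')) + ((ν - ν') • V + ν' • (V - V'))‖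
      ≤ ‖(‖p‖⁻¹ : ℝ) • D + (‖p‖⁻¹ - ‖p'‖⁻¹) • (p' - q')‖ + ‖(ν - ν') • V + ν' • (V - V')‖ :=
        norm_add_le _ _
    _ ≤ (‖(‖p‖⁻¹ : ℝ) • D‖ + ‖(‖p‖⁻¹ - ‖p'‖⁻¹ : ℝ) • (p' - q')‖) +
        (‖(ν - ν') • V‖ + ‖ν' • (V - V')‖) := by
        gcongr <;> exact norm_add_le _ _
    _ ≤ _ := by linarith

end Geo

namespace Geo

variable {r R : ℝ} {p q p' q' : E2}

lemma prod_norm_diff (hr : 0 < r) (hqR : ‖q‖ ≤ R) (hpR' : ‖p'‖ ≤ R) (hR0 : 0 ≤ R) :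
    |‖p‖ * ‖q‖ - ‖p'‖ * ‖q'‖| ≤ R * (‖p - p'‖ + ‖q - q'‖) := by
  have e1 : ‖p‖ * ‖q‖ - ‖p'‖ * ‖q'‖ = (‖p‖ - ‖p'‖) * ‖q‖ + ‖p'‖ * (‖q‖ - ‖q'‖) := by ring
  rw [e1]
  have e2 : |‖p‖ - ‖p'‖| ≤ ‖p - p'‖ := abs_norm_sub_norm_le p p'
  have e3 : |‖q‖ - ‖q'‖| ≤ ‖q - q'‖ := abs_norm_sub_norm_le q q'
  calc |(‖p‖ - ‖p'‖) * ‖q‖ + ‖p'‖ * (‖q‖ - ‖q'‖)|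
      ≤ |(‖p‖ - ‖p'‖) * ‖q‖| + |‖p'‖ * (‖q‖ - ‖q'‖)| := abs_add_le _ _
    _ = |‖p‖ - ‖p'‖| * ‖q‖ + ‖p'‖ * |‖q‖ - ‖q'‖| := by
        rw [abs_mul, abs_mul, abs_of_nonneg (norm_nonneg q), abs_of_nonneg (norm_nonneg p')]
    _ ≤ ‖p - p'‖ * R + R * ‖q - q'‖ := by
        have := abs_nonneg (‖p‖ - ‖p'‖)
        have := abs_nonneg (‖q‖ - ‖q'‖)
        nlinarith [norm_nonneg (p - p'), norm_nonneg (q - q'), norm_nonneg p']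
    _ = R * (‖p - p'‖ + ‖q - q'‖) := by ring

lemma sq_le (hr : 0 < r) (hp : r ≤ ‖p‖) : r * r ≤ ‖p‖ ^ 2 := by
  have := hr.trans_le hp
  nlinarith

lemma fA_lip (hr : 0 < r) (hp : r ≤ ‖p‖) (hq : r ≤ ‖q‖) (hpR : ‖p‖ ≤ R) (hqR : ‖q‖ ≤ R) :
    |fA p - fA q| ≤ ((r*r)⁻¹ * (r*r)⁻¹ * (2*R)) * ‖p - q‖ := by
  have hr2 : (0:ℝ) < r * r := by positivity
  have h1 : |fA p - fA q| ≤ (r*r)⁻¹ * (r*r)⁻¹ * |‖p‖ ^ 2 - ‖q‖ ^ 2| :=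
    inv_diff hr2 (sq_le hr hp) (sq_le hr hq)
  have h2 : |‖p‖ ^ 2 - ‖q‖ ^ 2| ≤ (2*R) * ‖p - q‖ := by
    have e : ‖p‖ ^ 2 - ‖q‖ ^ 2 = (‖p‖ - ‖q‖) * (‖p‖ + ‖q‖) := by ring
    rw [e, abs_mul, abs_of_nonneg (by positivity : (0:ℝ) ≤ ‖p‖ + ‖q‖)]
    have e2 : |‖p‖ - ‖q‖| ≤ ‖p - q‖ := abs_norm_sub_norm_le p q
    nlinarith [abs_nonneg (‖p‖ - ‖q‖), norm_nonneg (p - q), hr.trans_le hp, hr.trans_le hq]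
  calc |fA p - fA q| ≤ (r*r)⁻¹ * (r*r)⁻¹ * ((2*R) * ‖p - q‖) :=
        h1.trans (mul_le_mul_of_nonneg_left h2 (by positivity))
    _ = ((r*r)⁻¹ * (r*r)⁻¹ * (2*R)) * ‖p - q‖ := by ring

set_option maxHeartbeats 1000000 in
/-- second difference of `fA` -/
lemma fA_second (hr : 0 < r) (hp : r ≤ ‖p‖) (hq : r ≤ ‖q‖) (hp' : r ≤ ‖p'‖) (hq' : r ≤ ‖q'‖)
    (hpR : ‖p‖ ≤ R) (hqR : ‖q‖ ≤ R) (hpR' : ‖p'‖ ≤ R) (hqR' : ‖q'‖ ≤ R) :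
    |(fA p - fA q) - (fA p' - fA q')| ≤
      ((2*R) * (((r*r)*(r*r))⁻¹)) * ‖(p - q) - (p' - q')‖ +
      ((2*R) * (((r*r)*(r*r))⁻¹) * ((2*r)⁻¹ * (2*r)⁻¹ * (2*R) + (2*r)⁻¹)
        + (((r*r)*(r*r))⁻¹ + (2*R) * ((((r*r)*(r*r))⁻¹ * (((r*r)*(r*r))⁻¹)) * (R * (2*(R*R))))))
        * ((‖p - p'‖ + ‖q - q'‖) * ‖p' - q'‖) := by
  have hp0 : 0 < ‖p‖ := hr.trans_le hp
  have hq0 : 0 < ‖q‖ := hr.trans_le hq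
  have hp0' : 0 < ‖p'‖ := hr.trans_le hp'
  have hq0' : 0 < ‖q'‖ := hr.trans_le hq'
  have hR0 : (0:ℝ) < R := hp0.trans_le hpR
  have hr2 : (0:ℝ) < r * r := by positivity
  have hr4 : (0:ℝ) < (r*r)*(r*r) := by positivity
  set Sm : ℝ := ‖p - p'‖ + ‖q - q'‖ with hSm
  have hSm0 : 0 ≤ Sm := by rw [hSm]; positivity
  set D : E2 := (p - q) - (p' - q') with hD
  set c₄ : ℝ := (2*r)⁻¹ * (2*r)⁻¹ * (2*R) + (2*r)⁻¹ with hc₄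
  have hc₄0 : 0 ≤ c₄ := by rw [hc₄]; positivity
  set β : ℝ := (‖p‖ + ‖q‖) * ((‖p‖ * ‖q‖) * (‖p‖ * ‖q‖))⁻¹ with hβ
  set β' : ℝ := (‖p'‖ + ‖q'‖) * ((‖p'‖ * ‖q'‖) * (‖p'‖ * ‖q'‖))⁻¹ with hβ'
  have hdec : ∀ (a b : E2), 0 < ‖a‖ → 0 < ‖b‖ →
      fA a - fA b = (‖b‖ - ‖a‖) * ((‖a‖ + ‖b‖) * ((‖a‖ * ‖b‖) * (‖a‖ * ‖b‖))⁻¹) := by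
    intro a b ha hb
    rw [fA, fA]
    field_simp
    ring
  have hβmax : |β| ≤ (2*R) * (((r*r)*(r*r))⁻¹) := by
    rw [hβ, abs_mul, abs_of_nonneg (by positivity : (0:ℝ) ≤ ‖p‖ + ‖q‖),
      abs_of_pos (by positivity : (0:ℝ) < ((‖p‖ * ‖q‖) * (‖p‖ * ‖q‖))⁻¹)]
    have h1 : ‖p‖ + ‖q‖ ≤ 2*R := by linarith
    have h2 : ((‖p‖ * ‖q‖) * (‖p‖ * ‖q‖))⁻¹ ≤ ((r*r)*(r*r))⁻¹ := by
      apply inv_anti₀ hr4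
      have := mul_le_mul hp hq hr.le hp0.le
      nlinarith
    apply mul_le_mul h1 h2 (by positivity) (by positivity)
  have hββ : |β - β'| ≤ (((r*r)*(r*r))⁻¹ + (2*R) * ((((r*r)*(r*r))⁻¹ * (((r*r)*(r*r))⁻¹))
      * (R * (2*(R*R))))) * Sm := by
    have hab : r * r ≤ ‖p‖ * ‖q‖ := mul_le_mul hp hq hr.le hp0.le
    have hab' : r * r ≤ ‖p'‖ * ‖q'‖ := mul_le_mul hp' hq' hr.le hp0'.le
    have habR : ‖p‖ * ‖q‖ ≤ R * R := mul_le_mul hpR hqR hq0.le hR0.le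
    have habR' : ‖p'‖ * ‖q'‖ ≤ R * R := mul_le_mul hpR' hqR' hq0'.le hR0.le
    have h4 : (r*r)*(r*r) ≤ (‖p‖ * ‖q‖) * (‖p‖ * ‖q‖) := by nlinarith
    have h4' : (r*r)*(r*r) ≤ (‖p'‖ * ‖q'‖) * (‖p'‖ * ‖q'‖) := by nlinarith
    have e : β - β' = ((‖p‖ + ‖q‖) - (‖p'‖ + ‖q'‖)) * ((‖p‖ * ‖q‖) * (‖p‖ * ‖q‖))⁻¹
        + (‖p'‖ + ‖q'‖) * (((‖p‖ * ‖q‖) * (‖p‖ * ‖q‖))⁻¹ - ((‖p'‖ * ‖q'‖) * (‖p'‖ * ‖q'‖))⁻¹) := by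
      rw [hβ, hβ']; ring
    rw [e]
    have hS1 : |(‖p‖ + ‖q‖) - (‖p'‖ + ‖q'‖)| ≤ Sm := by
      have e1 : (‖p‖ + ‖q‖) - (‖p'‖ + ‖q'‖) = (‖p‖ - ‖p'‖) + (‖q‖ - ‖q'‖) := by ring
      rw [e1, hSm]
      calc |(‖p‖ - ‖p'‖) + (‖q‖ - ‖q'‖)| ≤ |‖p‖ - ‖p'‖| + |‖q‖ - ‖q'‖| := abs_add_le _ _
        _ ≤ ‖p - p'‖ + ‖q - q'‖ := by
            linarith [abs_norm_sub_norm_le p p', abs_norm_sub_norm_le q q']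
    have hI1 : ((‖p‖ * ‖q‖) * (‖p‖ * ‖q‖))⁻¹ ≤ ((r*r)*(r*r))⁻¹ := inv_anti₀ hr4 h4
    have hI2 : |((‖p‖ * ‖q‖) * (‖p‖ * ‖q‖))⁻¹ - ((‖p'‖ * ‖q'‖) * (‖p'‖ * ‖q'‖))⁻¹| ≤
        (((r*r)*(r*r))⁻¹ * (((r*r)*(r*r))⁻¹)) * (R * Sm * (2*(R*R))) := by
      have := inv_diff hr4 h4 h4'
      have hprod2 : |(‖p‖ * ‖q‖) * (‖p‖ * ‖q‖) - (‖p'‖ * ‖q'‖) * (‖p'‖ * ‖q'‖)| ≤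
          (R * Sm) * (2*(R*R)) := by
        have e2 : (‖p‖ * ‖q‖) * (‖p‖ * ‖q‖) - (‖p'‖ * ‖q'‖) * (‖p'‖ * ‖q'‖) =
            ((‖p‖ * ‖q‖) - (‖p'‖ * ‖q'‖)) * ((‖p‖ * ‖q‖) + (‖p'‖ * ‖q'‖)) := by ring
        rw [e2, abs_mul, abs_of_nonneg (by positivity : (0:ℝ) ≤ (‖p‖ * ‖q‖) + (‖p'‖ * ‖q'‖))]
        have hpd := prod_norm_diff (p := p) (q := q) (p' := p') (q' := q') hr hqR hpR' hR0.le
        rw [← hSm] at hpd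
        apply mul_le_mul hpd (by nlinarith) (by positivity)
          (by positivity)
      calc |((‖p‖ * ‖q‖) * (‖p‖ * ‖q‖))⁻¹ - ((‖p'‖ * ‖q'‖) * (‖p'‖ * ‖q'‖))⁻¹|
          ≤ ((r*r)*(r*r))⁻¹ * (((r*r)*(r*r))⁻¹) *
            |(‖p‖ * ‖q‖) * (‖p‖ * ‖q‖) - (‖p'‖ * ‖q'‖) * (‖p'‖ * ‖q'‖)| := this
        _ ≤ ((r*r)*(r*r))⁻¹ * (((r*r)*(r*r))⁻¹) * ((R * Sm) * (2*(R*R))) :=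
            mul_le_mul_of_nonneg_left hprod2 (by positivity)
        _ = (((r*r)*(r*r))⁻¹ * (((r*r)*(r*r))⁻¹)) * (R * Sm * (2*(R*R))) := by ring
    calc |((‖p‖ + ‖q‖) - (‖p'‖ + ‖q'‖)) * ((‖p‖ * ‖q‖) * (‖p‖ * ‖q‖))⁻¹
          + (‖p'‖ + ‖q'‖) * (((‖p‖ * ‖q‖) * (‖p‖ * ‖q‖))⁻¹ - ((‖p'‖ * ‖q'‖) * (‖p'‖ * ‖q'‖))⁻¹)|
        ≤ |((‖p‖ + ‖q‖) - (‖p'‖ + ‖q'‖))| * |((‖p‖ * ‖q‖) * (‖p‖ * ‖q‖))⁻¹|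
          + |(‖p'‖ + ‖q'‖)| *
            |((‖p‖ * ‖q‖) * (‖p‖ * ‖q‖))⁻¹ - ((‖p'‖ * ‖q'‖) * (‖p'‖ * ‖q'‖))⁻¹| := by
          calc _ ≤ _ := abs_add_le _ _
            _ = _ := by rw [abs_mul, abs_mul]
      _ ≤ Sm * ((r*r)*(r*r))⁻¹
          + (2*R) * ((((r*r)*(r*r))⁻¹ * (((r*r)*(r*r))⁻¹)) * (R * Sm * (2*(R*R)))) := by
          have hb1 : |((‖p‖ * ‖q‖) * (‖p‖ * ‖q‖))⁻¹| = ((‖p‖ * ‖q‖) * (‖p‖ * ‖q‖))⁻¹ :=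
            abs_of_pos (by positivity)
          have hb2 : |(‖p'‖ + ‖q'‖)| ≤ 2*R := by
            rw [abs_of_nonneg (by positivity : (0:ℝ) ≤ ‖p'‖ + ‖q'‖)]; linarith
          rw [hb1]
          have t1 : |((‖p‖ + ‖q‖) - (‖p'‖ + ‖q'‖))| * ((‖p‖ * ‖q‖) * (‖p‖ * ‖q‖))⁻¹ ≤
              Sm * ((r*r)*(r*r))⁻¹ := mul_le_mul hS1 hI1 (by positivity) hSm0
          have t2 : |(‖p'‖ + ‖q'‖)| *
              |((‖p‖ * ‖q‖) * (‖p‖ * ‖q‖))⁻¹ - ((‖p'‖ * ‖q'‖) * (‖p'‖ * ‖q'‖))⁻¹| ≤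
              (2*R) * ((((r*r)*(r*r))⁻¹ * (((r*r)*(r*r))⁻¹)) * (R * Sm * (2*(R*R)))) :=
            mul_le_mul hb2 hI2 (abs_nonneg _) (by positivity)
          linarith
      _ = (((r*r)*(r*r))⁻¹ + (2*R) * ((((r*r)*(r*r))⁻¹ * (((r*r)*(r*r))⁻¹))
          * (R * (2*(R*R))))) * Sm := by ring
  have hν : |(‖q‖ - ‖p‖) - (‖q'‖ - ‖p'‖)| ≤ ‖D‖ + c₄ * (Sm * ‖p' - q'‖) := by
    have e : (‖q‖ - ‖p‖) - (‖q'‖ - ‖p'‖) = -((‖p‖ - ‖q‖) - (‖p'‖ - ‖q'‖)) := by ring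
    rw [e, abs_neg]
    have := norm_second hr hp hq hp' hq' hpR' hqR'
    rw [← hSm, ← hD, ← hc₄] at this
    calc |(‖p‖ - ‖q‖) - (‖p'‖ - ‖q'‖)| ≤ ‖D‖ + c₄ * Sm * ‖p' - q'‖ := this
      _ = ‖D‖ + c₄ * (Sm * ‖p' - q'‖) := by ring
  have hν' : |‖q'‖ - ‖p'‖| ≤ ‖p' - q'‖ := by
    rw [abs_sub_comm]; exact abs_norm_sub_norm_le p' q'
  have e : (fA p - fA q) - (fA p' - fA q') =
      ((‖q‖ - ‖p‖) - (‖q'‖ - ‖p'‖)) * β + (‖q'‖ - ‖p'‖) * (β - β') := by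
    rw [hdec p q hp0 hq0, hdec p' q' hp0' hq0', hβ, hβ']; ring
  rw [e]
  have hfin1 : |((‖q‖ - ‖p‖) - (‖q'‖ - ‖p'‖)) * β| ≤
      (‖D‖ + c₄ * (Sm * ‖p' - q'‖)) * ((2*R) * (((r*r)*(r*r))⁻¹)) := by
    rw [abs_mul]
    exact mul_le_mul hν hβmax (abs_nonneg _) (by positivity)
  have hfin2 : |(‖q'‖ - ‖p'‖) * (β - β')| ≤
      ‖p' - q'‖ * ((((r*r)*(r*r))⁻¹ + (2*R) * ((((r*r)*(r*r))⁻¹ * (((r*r)*(r*r))⁻¹))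
        * (R * (2*(R*R))))) * Sm) := by
    rw [abs_mul]
    exact mul_le_mul hν' hββ (abs_nonneg _) (norm_nonneg _)
  calc |((‖q‖ - ‖p‖) - (‖q'‖ - ‖p'‖)) * β + (‖q'‖ - ‖p'‖) * (β - β')|
      ≤ |((‖q‖ - ‖p‖) - (‖q'‖ - ‖p'‖)) * β| + |(‖q'‖ - ‖p'‖) * (β - β')| := abs_add_le _ _
    _ ≤ (‖D‖ + c₄ * (Sm * ‖p' - q'‖)) * ((2*R) * (((r*r)*(r*r))⁻¹))
        + ‖p' - q'‖ * ((((r*r)*(r*r))⁻¹ + (2*R) * ((((r*r)*(r*r))⁻¹ * (((r*r)*(r*r))⁻¹))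
          * (R * (2*(R*R))))) * Sm) := by linarith
    _ = _ := by ring

end Geo

namespace Geo

set_option maxHeartbeats 1000000 in
lemma coeffA_lip_ex (r R M K : ℝ) (hr : 0 < r) (hrR : r ≤ R) (hM : 0 ≤ M) (hK : 0 ≤ K) :
    ∃ C : ℝ, 0 ≤ C ∧ ∀ ψ : E2 → ℝ, Differentiable ℝ ψ →
      (∀ u : E2, |ψ u| ≤ M) → (∀ u : E2, ‖fderiv ℝ ψ u‖ ≤ K) →
      ∀ p q : E2, r ≤ ‖p‖ → r ≤ ‖q‖ → ‖p‖ ≤ R → ‖q‖ ≤ R →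
        |coeffA ψ p - coeffA ψ q| ≤ C * ‖p - q‖ := by
  have hR0 : (0:ℝ) < R := hr.trans_le hrR
  refine ⟨((r*r)⁻¹ * (r*r)⁻¹ * (2*R)) * M + (r*r)⁻¹ * (K * (r⁻¹ + r⁻¹*r⁻¹*R)),
    by positivity, ?_⟩
  intro ψ hd hMψ hKψ p q hp hq hpR hqR
  have hq0 : 0 < ‖q‖ := hr.trans_le hq
  have hr2 : (0:ℝ) < r * r := by positivity
  have hca : ∀ ξ : E2, coeffA ψ ξ = fA ξ * ψ (uvec ξ) := fun ξ => rfl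
  have e : coeffA ψ p - coeffA ψ q =
      (fA p - fA q) * ψ (uvec p) + fA q * (ψ (uvec p) - ψ (uvec q)) := by
    rw [hca, hca]; ring
  rw [e]
  have h1 : |(fA p - fA q) * ψ (uvec p)| ≤
      (((r*r)⁻¹ * (r*r)⁻¹ * (2*R)) * ‖p - q‖) * M := by
    rw [abs_mul]
    exact mul_le_mul (fA_lip hr hp hq hpR hqR) (hMψ _) (abs_nonneg _) (by positivity)
  have h2 : |fA q * (ψ (uvec p) - ψ (uvec q))| ≤
      (r*r)⁻¹ * (K * ((r⁻¹ + r⁻¹*r⁻¹*R) * ‖p - q‖)) := by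
    rw [abs_mul]
    have hfq : |fA q| ≤ (r*r)⁻¹ := by
      rw [fA, abs_of_pos (by positivity : (0:ℝ) < (‖q‖^2)⁻¹)]
      exact inv_anti₀ hr2 (sq_le hr hq)
    have hψd : |ψ (uvec p) - ψ (uvec q)| ≤ K * ((r⁻¹ + r⁻¹*r⁻¹*R) * ‖p - q‖) := by
      calc |ψ (uvec p) - ψ (uvec q)| ≤ K * ‖uvec p - uvec q‖ :=
            CoeffAux.psi_lip ψ hd hKψ _ _
        _ ≤ K * ((r⁻¹ + r⁻¹*r⁻¹*R) * ‖p - q‖) :=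
            mul_le_mul_of_nonneg_left (uvec_lip hr hp hq hqR) hK
    exact mul_le_mul hfq hψd (abs_nonneg _) (by positivity)
  calc |(fA p - fA q) * ψ (uvec p) + fA q * (ψ (uvec p) - ψ (uvec q))|
      ≤ |(fA p - fA q) * ψ (uvec p)| + |fA q * (ψ (uvec p) - ψ (uvec q))| := abs_add_le _ _
    _ ≤ (((r*r)⁻¹ * (r*r)⁻¹ * (2*R)) * ‖p - q‖) * M
        + (r*r)⁻¹ * (K * ((r⁻¹ + r⁻¹*r⁻¹*R) * ‖p - q‖)) := by linarith
    _ = (((r*r)⁻¹ * (r*r)⁻¹ * (2*R)) * M + (r*r)⁻¹ * (K * (r⁻¹ + r⁻¹*r⁻¹*R))) * ‖p - q‖ := by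
        ring

end Geo

namespace Geo

set_option maxHeartbeats 2000000 in
lemma coeffA_second_ex (r R M K K' : ℝ) (hr : 0 < r) (hrR : r ≤ R)
    (hM : 0 ≤ M) (hK : 0 ≤ K) (hK' : 0 ≤ K') :
    ∃ C : ℝ, 0 ≤ C ∧ ∀ ψ : E2 → ℝ, Differentiable ℝ ψ →
      (∀ u : E2, |ψ u| ≤ M) → (∀ u : E2, ‖fderiv ℝ ψ u‖ ≤ K) →
      (∀ u v : E2, ‖fderiv ℝ ψ u - fderiv ℝ ψ v‖ ≤ K' * ‖u - v‖) →
      ∀ p q p' q' : E2, r ≤ ‖p‖ → r ≤ ‖q‖ → r ≤ ‖p'‖ → r ≤ ‖q'‖ →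
        ‖p‖ ≤ R → ‖q‖ ≤ R → ‖p'‖ ≤ R → ‖q'‖ ≤ R →
        |(coeffA ψ p - coeffA ψ q) - (coeffA ψ p' - coeffA ψ q')| ≤
          C * ‖(p - q) - (p' - q')‖ +
          C * ((‖p - p'‖ + ‖q - q'‖) * ‖p' - q'‖) := by
  have hR0 : (0:ℝ) < R := hr.trans_le hrR
  set cu : ℝ := r⁻¹ + r⁻¹*r⁻¹*R with hcu
  set c₄ : ℝ := (2*r)⁻¹ * (2*r)⁻¹ * (2*R) + (2*r)⁻¹ with hc₄
  set ua : ℝ := 2*r⁻¹ with hua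
  set ub : ℝ := 2*(r⁻¹*r⁻¹) + c₄*r⁻¹ + R*R*(r⁻¹*r⁻¹*r⁻¹*r⁻¹) with hub
  set faL : ℝ := (r*r)⁻¹ * (r*r)⁻¹ * (2*R) with hfaL
  set faA : ℝ := (2*R) * (((r*r)*(r*r))⁻¹) with hfaA
  set faB : ℝ := faA * c₄ + (((r*r)*(r*r))⁻¹
      + (2*R) * ((((r*r)*(r*r))⁻¹ * (((r*r)*(r*r))⁻¹)) * (R * (2*(R*R))))) with hfaB
  have hcu0 : 0 ≤ cu := by rw [hcu]; positivity
  have hc₄0 : 0 ≤ c₄ := by rw [hc₄]; positivity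
  have hua0 : 0 ≤ ua := by rw [hua]; positivity
  have hub0 : 0 ≤ ub := by rw [hub, hc₄]; positivity
  have hfaL0 : 0 ≤ faL := by rw [hfaL]; positivity
  have hfaA0 : 0 ≤ faA := by rw [hfaA]; positivity
  have hfaB0 : 0 ≤ faB := by rw [hfaB, hfaA, hc₄]; positivity
  have hr2 : (0:ℝ) < r * r := by positivity
  refine ⟨(M*faA + (r*r)⁻¹*(K*ua)) +
      (M*faB + 2*(faL*(K*cu)) + (r*r)⁻¹*(K*ub + K'*(cu*cu))), ?_, ?_⟩
  · positivity
  intro ψ hd hMψ hKψ hK'ψ p q p' q' hp hq hp' hq' hpR hqR hpR' hqR'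
  have hq0 : 0 < ‖q‖ := hr.trans_le hq
  set X : ℝ := ‖(p - q) - (p' - q')‖ with hX
  set Sm : ℝ := ‖p - p'‖ + ‖q - q'‖ with hSm
  set Y : ℝ := Sm * ‖p' - q'‖ with hY
  have hX0 : 0 ≤ X := norm_nonneg _
  have hSm0 : 0 ≤ Sm := by rw [hSm]; positivity
  have hY0 : 0 ≤ Y := by rw [hY]; positivity
  set g : E2 → ℝ := fun ξ => ψ (uvec ξ) with hg
  have hca : ∀ ξ : E2, coeffA ψ ξ = fA ξ * g ξ := fun ξ => rfl
  have e : (coeffA ψ p - coeffA ψ q) - (coeffA ψ p' - coeffA ψ q') =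
      ((fA p - fA q) - (fA p' - fA q')) * g p
      + (fA p' - fA q') * (g p - g p')
      + fA q * ((g p - g q) - (g p' - g q'))
      + (fA q - fA q') * (g p' - g q') := by
    rw [hca, hca, hca, hca]; ring
  rw [e]
  -- second difference of g
  have hglem : |(g p - g q) - (g p' - g q')| ≤ K * (ua * X + ub * Y) + K' * (cu*cu) * Y := by
    have hAB : g p - g q - (g p' - g q') =
        (ψ (uvec p) - ψ (uvec q + (uvec p' - uvec q')))
        + (ψ (uvec q + (uvec p' - uvec q')) - ψ (uvec q)
          - (ψ (uvec q' + (uvec p' - uvec q')) - ψ (uvec q'))) := by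
      rw [hg]
      simp only []
      rw [add_sub_cancel]
      ring
    rw [hAB]
    have t1 : |ψ (uvec p) - ψ (uvec q + (uvec p' - uvec q'))| ≤ K * (ua * X + ub * Y) := by
      have e1 : uvec p - (uvec q + (uvec p' - uvec q')) =
          (uvec p - uvec q) - (uvec p' - uvec q') := by abel
      calc |ψ (uvec p) - ψ (uvec q + (uvec p' - uvec q'))|
          ≤ K * ‖uvec p - (uvec q + (uvec p' - uvec q'))‖ := CoeffAux.psi_lip ψ hd hKψ _ _
        _ = K * ‖(uvec p - uvec q) - (uvec p' - uvec q')‖ := by rw [e1]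
        _ ≤ K * (ua * X + ub * Y) := by
            apply mul_le_mul_of_nonneg_left _ hK
            have := uvec_second hr hp hq hp' hq' hpR hqR hpR' hqR'
            rw [← hX, ← hSm, ← hc₄] at this
            calc ‖(uvec p - uvec q) - (uvec p' - uvec q')‖
                ≤ (2*r⁻¹) * X + (2*(r⁻¹*r⁻¹) + c₄*r⁻¹ + R*R*(r⁻¹*r⁻¹*r⁻¹*r⁻¹))
                  * (Sm * ‖p' - q'‖) := this
              _ = ua * X + ub * Y := by rw [hua, hub, hY]
    have t2 : |ψ (uvec q + (uvec p' - uvec q')) - ψ (uvec q)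
        - (ψ (uvec q' + (uvec p' - uvec q')) - ψ (uvec q'))| ≤ K' * (cu*cu) * Y := by
      calc |ψ (uvec q + (uvec p' - uvec q')) - ψ (uvec q)
            - (ψ (uvec q' + (uvec p' - uvec q')) - ψ (uvec q'))|
          ≤ (K' * ‖uvec p' - uvec q'‖) * ‖uvec q - uvec q'‖ :=
            CoeffAux.psi_shift ψ hd hK'ψ _ _ _
        _ ≤ (K' * (cu * ‖p' - q'‖)) * (cu * ‖q - q'‖) := by
            apply mul_le_mul
            · exact mul_le_mul_of_nonneg_left (uvec_lip hr hp' hq' hqR') hK'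
            · exact uvec_lip hr hq hq' hqR'
            · exact norm_nonneg _
            · positivity
        _ = (K' * (cu*cu)) * (‖q - q'‖ * ‖p' - q'‖) := by ring
        _ ≤ (K' * (cu*cu)) * Y := by
            apply mul_le_mul_of_nonneg_left _ (by positivity)
            rw [hY, hSm]
            exact mul_le_mul_of_nonneg_right (le_add_of_nonneg_left (norm_nonneg _))
              (norm_nonneg _)
        _ = K' * (cu*cu) * Y := by ring
    calc |_ + _| ≤ _ := abs_add_le _ _
      _ ≤ K * (ua * X + ub * Y) + K' * (cu*cu) * Y := by linarith only [t1, t2]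
  -- bounds on the four terms
  have hfq : |fA q| ≤ (r*r)⁻¹ := by
    rw [fA, abs_of_pos (by positivity : (0:ℝ) < (‖q‖^2)⁻¹)]
    exact inv_anti₀ hr2 (sq_le hr hq)
  have hT1 : |((fA p - fA q) - (fA p' - fA q')) * g p| ≤ (faA * X + faB * Y) * M := by
    rw [abs_mul]
    have := fA_second hr hp hq hp' hq' hpR hqR hpR' hqR'
    rw [← hX, ← hSm] at this
    have h2 : |(fA p - fA q) - (fA p' - fA q')| ≤ faA * X + faB * Y := by
      have e3 : faA * X + faB * Y =
          ((2*R) * (((r*r)*(r*r))⁻¹)) * X +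
          ((2*R) * (((r*r)*(r*r))⁻¹) * ((2*r)⁻¹ * (2*r)⁻¹ * (2*R) + (2*r)⁻¹)
            + (((r*r)*(r*r))⁻¹ + (2*R) * ((((r*r)*(r*r))⁻¹ * (((r*r)*(r*r))⁻¹))
              * (R * (2*(R*R)))))) * (Sm * ‖p' - q'‖) := by
        rw [hfaA, hfaB, hc₄, hY]
      rw [e3]; exact this
    exact mul_le_mul h2 (hMψ _) (abs_nonneg _) (by positivity)
  have glip : ∀ a b : E2, r ≤ ‖a‖ → r ≤ ‖b‖ → ‖b‖ ≤ R → |g a - g b| ≤ K * (cu * ‖a - b‖) := by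
    intro a b ha hb hbR
    calc |g a - g b| ≤ K * ‖uvec a - uvec b‖ := CoeffAux.psi_lip ψ hd hKψ _ _
      _ ≤ K * (cu * ‖a - b‖) := mul_le_mul_of_nonneg_left (uvec_lip hr ha hb hbR) hK
  have hT2 : |(fA p' - fA q') * (g p - g p')| ≤ faL*(K*cu) * Y := by
    rw [abs_mul]
    have b1 : |fA p' - fA q'| ≤ faL * ‖p' - q'‖ := by
      rw [hfaL]; exact fA_lip hr hp' hq' hpR' hqR'
    have b2 : |g p - g p'| ≤ K * (cu * ‖p - p'‖) := glip p p' hp hp' hpR'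
    calc |fA p' - fA q'| * |g p - g p'| ≤ (faL * ‖p' - q'‖) * (K * (cu * ‖p - p'‖)) :=
          mul_le_mul b1 b2 (abs_nonneg _) (by positivity)
      _ = (faL*(K*cu)) * (‖p - p'‖ * ‖p' - q'‖) := by ring
      _ ≤ (faL*(K*cu)) * Y := by
          apply mul_le_mul_of_nonneg_left _ (by positivity)
          rw [hY, hSm]
          exact mul_le_mul_of_nonneg_right (le_add_of_nonneg_right (norm_nonneg _))
            (norm_nonneg _)
  have hT3 : |fA q * ((g p - g q) - (g p' - g q'))| ≤
      (r*r)⁻¹ * (K * (ua * X + ub * Y) + K' * (cu*cu) * Y) := by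
    rw [abs_mul]
    apply mul_le_mul hfq hglem (abs_nonneg _) (by positivity)
  have hT4 : |(fA q - fA q') * (g p' - g q')| ≤ faL*(K*cu) * Y := by
    rw [abs_mul]
    have b1 : |fA q - fA q'| ≤ faL * ‖q - q'‖ := by
      rw [hfaL]; exact fA_lip hr hq hq' hqR hqR'
    have b2 : |g p' - g q'| ≤ K * (cu * ‖p' - q'‖) := glip p' q' hp' hq' hqR'
    calc |fA q - fA q'| * |g p' - g q'| ≤ (faL * ‖q - q'‖) * (K * (cu * ‖p' - q'‖)) :=
          mul_le_mul b1 b2 (abs_nonneg _) (by positivity)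
      _ = (faL*(K*cu)) * (‖q - q'‖ * ‖p' - q'‖) := by ring
      _ ≤ (faL*(K*cu)) * Y := by
          apply mul_le_mul_of_nonneg_left _ (by positivity)
          rw [hY, hSm]
          exact mul_le_mul_of_nonneg_right (le_add_of_nonneg_left (norm_nonneg _))
            (norm_nonneg _)
  have habs : |((fA p - fA q) - (fA p' - fA q')) * g p
      + (fA p' - fA q') * (g p - g p')
      + fA q * ((g p - g q) - (g p' - g q'))
      + (fA q - fA q') * (g p' - g q')| ≤
      |((fA p - fA q) - (fA p' - fA q')) * g p| + |(fA p' - fA q') * (g p - g p')|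
      + |fA q * ((g p - g q) - (g p' - g q'))| + |(fA q - fA q') * (g p' - g q')| := by
    calc |_ + _ + _ + _| ≤ |_ + _ + _| + |(fA q - fA q') * (g p' - g q')| := abs_add_le _ _
      _ ≤ (|_ + _| + |fA q * ((g p - g q) - (g p' - g q'))|)
          + |(fA q - fA q') * (g p' - g q')| := by
          gcongr
          exact abs_add_le _ _
      _ ≤ _ := by
          gcongr
          exact abs_add_le _ _
  have hfin := habs.trans (add_le_add (add_le_add (add_le_add hT1 hT2) hT3) hT4)
  calc |((fA p - fA q) - (fA p' - fA q')) * g p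
      + (fA p' - fA q') * (g p - g p')
      + fA q * ((g p - g q) - (g p' - g q'))
      + (fA q - fA q') * (g p' - g q')| ≤
      (faA * X + faB * Y) * M + faL*(K*cu) * Y
      + (r*r)⁻¹ * (K * (ua * X + ub * Y) + K' * (cu*cu) * Y) + faL*(K*cu) * Y := hfin
    _ = (M*faA + (r*r)⁻¹*(K*ua)) * X
        + (M*faB + 2*(faL*(K*cu)) + (r*r)⁻¹*(K*ub + K'*(cu*cu))) * Y := by ring
    _ ≤ ((M*faA + (r*r)⁻¹*(K*ua)) +
        (M*faB + 2*(faL*(K*cu)) + (r*r)⁻¹*(K*ub + K'*(cu*cu)))) * X +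
        ((M*faA + (r*r)⁻¹*(K*ua)) +
        (M*faB + 2*(faL*(K*cu)) + (r*r)⁻¹*(K*ub + K'*(cu*cu)))) * Y := by
        have c1 : 0 ≤ M*faA + (r*r)⁻¹*(K*ua) := by positivity
        have c2 : 0 ≤ M*faB + 2*(faL*(K*cu)) + (r*r)⁻¹*(K*ub + K'*(cu*cu)) := by positivity
        have e2 : ((M*faA + (r*r)⁻¹*(K*ua)) +
            (M*faB + 2*(faL*(K*cu)) + (r*r)⁻¹*(K*ub + K'*(cu*cu)))) * X +
            ((M*faA + (r*r)⁻¹*(K*ua)) +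
            (M*faB + 2*(faL*(K*cu)) + (r*r)⁻¹*(K*ub + K'*(cu*cu)))) * Y =
            ((M*faA + (r*r)⁻¹*(K*ua)) * X
            + (M*faB + 2*(faL*(K*cu)) + (r*r)⁻¹*(K*ub + K'*(cu*cu))) * Y)
            + ((M*faB + 2*(faL*(K*cu)) + (r*r)⁻¹*(K*ub + K'*(cu*cu))) * X
              + (M*faA + (r*r)⁻¹*(K*ua)) * Y) := by ring
        rw [e2]
        have n1 : 0 ≤ (M*faB + 2*(faL*(K*cu)) + (r*r)⁻¹*(K*ub + K'*(cu*cu))) * X :=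
          mul_nonneg c2 hX0
        have n2 : 0 ≤ (M*faA + (r*r)⁻¹*(K*ua)) * Y := mul_nonneg c1 hY0
        exact le_add_of_nonneg_right (add_nonneg n1 n2)

end Geo

set_option maxHeartbeats 1000000 in
/-- The spatial part of Lemma A.2 of the paper (estimates (5.3)–(5.5)):
Lipschitz and Hölder-seminorm continuity of `v ↦ a∘v` on the set of `α`-Hölder
functions bounded away from zero. -/
theorem coeff_holder_estimates
    (α : ℝ) (hα : α ∈ Set.Ioc (0:ℝ) 1)
    (m₁ m₂ M K K' : ℝ) (hm₁ : 0 < m₁) (hm₁₂ : m₁ ≤ m₂)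
    (hM : 0 ≤ M) (hK : 0 ≤ K) (hK' : 0 ≤ K') :
    ∃ L : ℝ, ∀ ψ : E2 → ℝ, Differentiable ℝ ψ →
      (∀ u : E2, |ψ u| ≤ M) →
      (∀ u : E2, ‖fderiv ℝ ψ u‖ ≤ K) →
      (∀ u v : E2, ‖fderiv ℝ ψ u - fderiv ℝ ψ v‖ ≤ K' * ‖u - v‖) →
      ∀ v' v'' : ℝ → E2,
        (∀ x ∈ Set.Icc (0:ℝ) 1, m₁ ≤ ‖v' x‖ ∧ ‖v' x‖ ≤ m₂) →
        (∀ x ∈ Set.Icc (0:ℝ) 1, m₁ ≤ ‖v'' x‖ ∧ ‖v'' x‖ ≤ m₂) →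
        (∀ x ∈ Set.Icc (0:ℝ) 1, ∀ y ∈ Set.Icc (0:ℝ) 1,
           ‖v' x - v' y‖ ≤ m₂ * |x - y| ^ α) →
        (∀ x ∈ Set.Icc (0:ℝ) 1, ∀ y ∈ Set.Icc (0:ℝ) 1,
           ‖v'' x - v'' y‖ ≤ m₂ * |x - y| ^ α) →
        supN (fun x => coeffA ψ (v' x) - coeffA ψ (v'' x))
            ≤ L * supNE (fun x => v' x - v'' x)
          ∧ hSemi α (fun x => coeffA ψ (v' x) - coeffA ψ (v'' x))
            ≤ L * (supNE (fun x => v' x - v'' x)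
                + hSemiE α (fun x => v' x - v'' x)) := by
  obtain ⟨C1, hC10, hC1⟩ := Geo.coeffA_lip_ex m₁ m₂ M K hm₁ hm₁₂ hM hK
  obtain ⟨C2, hC20, hC2⟩ := Geo.coeffA_second_ex m₁ m₂ M K K' hm₁ hm₁₂ hM hK hK'
  have hm₂0 : 0 < m₂ := hm₁.trans_le hm₁₂
  refine ⟨C1 + C2 * (1 + 2*m₂), ?_⟩
  intro ψ hd hMψ hKψ hK'ψ v' v'' hv' hv'' hH' hH''
  have hL0 : 0 ≤ C1 + C2 * (1 + 2*m₂) := by positivity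
  set W : ℝ := supNE (fun x => v' x - v'' x) with hW
  set H : ℝ := hSemiE α (fun x => v' x - v'' x) with hH
  have hW0 : 0 ≤ W := by
    rw [hW, supNE]
    apply Real.sSup_nonneg
    rintro y ⟨x, hx, rfl⟩
    exact norm_nonneg _
  have hH0 : 0 ≤ H := by
    rw [hH, hSemiE]
    apply Real.sSup_nonneg
    rintro y ⟨pp, hpp, rfl⟩
    exact div_nonneg (norm_nonneg _) (Real.rpow_nonneg (abs_nonneg _) α)
  have hWle : ∀ x ∈ Set.Icc (0:ℝ) 1, ‖v' x - v'' x‖ ≤ W := by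
    intro x hx
    rw [hW, supNE]
    apply le_csSup
    · refine ⟨2*m₂, ?_⟩
      rintro y ⟨z, hz, rfl⟩
      have h1 := (hv' z hz).2
      have h2 := (hv'' z hz).2
      calc ‖v' z - v'' z‖ ≤ ‖v' z‖ + ‖v'' z‖ := norm_sub_le _ _
        _ ≤ 2*m₂ := by linarith
    · exact ⟨x, hx, rfl⟩
  have hHle : ∀ x ∈ Set.Icc (0:ℝ) 1, ∀ y ∈ Set.Icc (0:ℝ) 1, x ≠ y →
      ‖(v' x - v'' x) - (v' y - v'' y)‖ ≤ H * |x - y| ^ α := by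
    intro x hx y hy hne
    have ht : (0:ℝ) < |x - y| ^ α :=
      Real.rpow_pos_of_pos (abs_pos.2 (sub_ne_zero.2 hne)) α
    have hel : ‖(v' x - v'' x) - (v' y - v'' y)‖ / |x - y| ^ α ≤ H := by
      rw [hH, hSemiE]
      apply le_csSup
      · refine ⟨2*m₂, ?_⟩
        rintro u ⟨pp, ⟨hp1, hp2, hpne⟩, rfl⟩
        have htp : (0:ℝ) < |pp.1 - pp.2| ^ α :=
          Real.rpow_pos_of_pos (abs_pos.2 (sub_ne_zero.2 hpne)) α
        rw [div_le_iff₀ htp]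
        have b1 := hH' pp.1 hp1 pp.2 hp2
        have b2 := hH'' pp.1 hp1 pp.2 hp2
        have e : (v' pp.1 - v'' pp.1) - (v' pp.2 - v'' pp.2) =
            (v' pp.1 - v' pp.2) - (v'' pp.1 - v'' pp.2) := by abel
        calc ‖(fun x => v' x - v'' x) pp.1 - (fun x => v' x - v'' x) pp.2‖
            = ‖(v' pp.1 - v' pp.2) - (v'' pp.1 - v'' pp.2)‖ := by simp only []; rw [e]
          _ ≤ ‖v' pp.1 - v' pp.2‖ + ‖v'' pp.1 - v'' pp.2‖ := norm_sub_le _ _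
          _ ≤ 2*m₂ * |pp.1 - pp.2| ^ α := by linarith
      · exact ⟨(x, y), ⟨hx, hy, hne⟩, rfl⟩
    rw [div_le_iff₀ ht] at hel
    calc ‖(v' x - v'' x) - (v' y - v'' y)‖ =
        ‖(fun x => v' x - v'' x) x - (fun x => v' x - v'' x) y‖ := rfl
      _ ≤ H * |x - y| ^ α := hel
  constructor
  · -- sup norm estimate
    rw [supN]
    apply Real.sSup_le
    · rintro y ⟨x, hx, rfl⟩
      have h1 := hv' x hx
      have h2 := hv'' x hx
      have hb := hC1 ψ hd hMψ hKψ (v' x) (v'' x) h1.1 h2.1 h1.2 h2.2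
      calc |(fun x => coeffA ψ (v' x) - coeffA ψ (v'' x)) x|
          = |coeffA ψ (v' x) - coeffA ψ (v'' x)| := rfl
        _ ≤ C1 * ‖v' x - v'' x‖ := hb
        _ ≤ C1 * W := mul_le_mul_of_nonneg_left (hWle x hx) hC10
        _ ≤ (C1 + C2 * (1 + 2*m₂)) * W := by
            nlinarith [mul_nonneg (mul_nonneg hC20 (by linarith : (0:ℝ) ≤ 1 + 2*m₂)) hW0]
    · exact mul_nonneg hL0 hW0
  · -- Hölder seminorm estimate
    rw [hSemi, hSet]
    apply Real.sSup_le
    · rintro y ⟨pp, ⟨hp1, hp2, hpne⟩, rfl⟩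
      obtain ⟨x, x'⟩ := pp
      simp only [] at hp1 hp2 hpne ⊢
      set t : ℝ := |x - x'| ^ α with htdef
      have ht : (0:ℝ) < t := Real.rpow_pos_of_pos (abs_pos.2 (sub_ne_zero.2 hpne)) α
      rw [div_le_iff₀ ht]
      have h1 := hv' x hp1
      have h2 := hv'' x hp1
      have h1' := hv' x' hp2
      have h2' := hv'' x' hp2
      have hb := hC2 ψ hd hMψ hKψ hK'ψ (v' x) (v'' x) (v' x') (v'' x')
        h1.1 h2.1 h1'.1 h2'.1 h1.2 h2.2 h1'.2 h2'.2
      have b1 : ‖(v' x - v'' x) - (v' x' - v'' x')‖ ≤ H * t := hHle x hp1 x' hp2 hpne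
      have b2 : ‖v' x - v' x'‖ + ‖v'' x - v'' x'‖ ≤ 2*m₂*t := by
        have := hH' x hp1 x' hp2
        have := hH'' x hp1 x' hp2
        rw [htdef]; linarith
      have b3 : ‖v' x' - v'' x'‖ ≤ W := hWle x' hp2
      have ht0 : 0 ≤ t := ht.le
      have key : |(coeffA ψ (v' x) - coeffA ψ (v'' x)) - (coeffA ψ (v' x') - coeffA ψ (v'' x'))|
          ≤ C2 * (H * t) + C2 * ((2*m₂*t) * W) := by
        calc |(coeffA ψ (v' x) - coeffA ψ (v'' x)) - (coeffA ψ (v' x') - coeffA ψ (v'' x'))|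
            ≤ C2 * ‖(v' x - v'' x) - (v' x' - v'' x')‖ +
              C2 * ((‖v' x - v' x'‖ + ‖v'' x - v'' x'‖) * ‖v' x' - v'' x'‖) := hb
          _ ≤ C2 * (H * t) + C2 * ((2*m₂*t) * W) := by
              have s1 : C2 * ‖(v' x - v'' x) - (v' x' - v'' x')‖ ≤ C2 * (H * t) :=
                mul_le_mul_of_nonneg_left b1 hC20
              have s2 : (‖v' x - v' x'‖ + ‖v'' x - v'' x'‖) * ‖v' x' - v'' x'‖ ≤
                  (2*m₂*t) * W := by
                apply mul_le_mul b2 b3 (norm_nonneg _) (by positivity)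
              have s3 : C2 * ((‖v' x - v' x'‖ + ‖v'' x - v'' x'‖) * ‖v' x' - v'' x'‖) ≤
                  C2 * ((2*m₂*t) * W) := mul_le_mul_of_nonneg_left s2 hC20
              linarith
      calc |(coeffA ψ (v' x) - coeffA ψ (v'' x)) - (coeffA ψ (v' x') - coeffA ψ (v'' x'))|
          ≤ C2 * (H * t) + C2 * ((2*m₂*t) * W) := key
        _ ≤ ((C1 + C2 * (1 + 2*m₂)) * (W + H)) * t := by
            nlinarith [mul_nonneg (mul_nonneg hC10 hW0) ht0,
              mul_nonneg (mul_nonneg hC10 hH0) ht0,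
              mul_nonneg (mul_nonneg hC20 hW0) ht0,
              mul_nonneg (mul_nonneg (mul_nonneg hC20 hm₂0.le) hH0) ht0]
    · exact mul_nonneg hL0 (add_nonneg hW0 hH0)
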